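/- Let H be a separable complex Hilbert space, {S_γ}_{γ∈Γ} a family of finite-dimensional subspaces of H, χ = ∪_{γ∈Γ} S_γ, and S_{γ,θ} = S_γ + S_θ. Let Ψ = {ψ_i}_{i∈I} be a Bessel sequence in H with sampling operator A, and for every γ,θ ∈ Γ let Φ_{γ,θ} be a Parseval frame for S_{γ,θ}. Then A is stable on χ with constants α and β if and only if for all γ,θ ∈ Γ: (i) dim(range(G_{Φ_{γ,θ},Ψ})) = dim(S_{γ,θ}) and (ii) σ(G_{Φ_{γ,θ},Ψ}* G_{Φ_{γ,θ},Ψ}) ⊆ {0} ∪ [α,β]. -/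

import Mathlib

set_option maxHeartbeats 1000000

open scoped ComplexInnerProductSpace

-- helper: spectrum = eigenvalues in finite dimension
lemma aux_mem_spectrum_iff {E : Type*} [NormedAddCommGroup E] [InnerProductSpace ℂ E]
    [FiniteDimensional ℂ E] (M : E →L[ℂ] E) (z : ℂ) :
    z ∈ spectrum ℂ M ↔ ∃ c : E, c ≠ 0 ∧ M c = z • c := by
  rw [spectrum.mem_iff, ContinuousLinearMap.isUnit_iff_bijective]
  have happ : ∀ c : E, (algebraMap ℂ (E →L[ℂ] E) z - M) c = z • c - M c := by
    intro c
    simp [Algebra.algebraMap_eq_smul_one, ContinuousLinearMap.sub_apply,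
      ContinuousLinearMap.smul_apply, ContinuousLinearMap.one_apply]
  constructor
  · intro hnb
    by_contra hne
    push_neg at hne
    apply hnb
    have hinj : Function.Injective (algebraMap ℂ (E →L[ℂ] E) z - M) := by
      intro x y hxy
      by_contra hxy'
      refine hne (x - y) (sub_ne_zero.mpr hxy') ?_
      have h0 : (algebraMap ℂ (E →L[ℂ] E) z - M) (x - y) = 0 := by
        rw [map_sub, hxy, sub_self]
      rw [happ, sub_eq_zero] at h0
      exact h0.symm
    have hsurj : Function.Surjective (algebraMap ℂ (E →L[ℂ] E) z - M) :=
      (LinearMap.injective_iff_surjective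
        (f := ((algebraMap ℂ (E →L[ℂ] E) z - M : E →L[ℂ] E) : E →ₗ[ℂ] E))).mp hinj
    exact ⟨hinj, hsurj⟩
  · rintro ⟨c, hc0, hMc⟩ hbij
    have h0 : (algebraMap ℂ (E →L[ℂ] E) z - M) c = 0 := by
      rw [happ, hMc, sub_self]
    have : c = 0 := by
      apply hbij.1
      rw [h0, map_zero]
    exact hc0 this

section Aux

variable {H : Type*} [NormedAddCommGroup H] [InnerProductSpace ℂ H]

/-- synthesis operator of a finite family -/
noncomputable def auxSyn {d : ℕ} (φ : Fin d → H) : EuclideanSpace ℂ (Fin d) →ₗ[ℂ] H where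
  toFun c := ∑ j, c j • φ j
  map_add' c c' := by
    simp only [show ∀ x, (c + c') x = c x + c' x from fun _ => rfl, add_smul,
      Finset.sum_add_distrib]
  map_smul' a c := by
    simp only [show ∀ x, (a • c) x = a * c x from fun _ => rfl, RingHom.id_apply,
      Finset.smul_sum, smul_smul]

@[simp] lemma auxSyn_apply {d : ℕ} (φ : Fin d → H) (c : EuclideanSpace ℂ (Fin d)) :
    auxSyn φ c = ∑ j, c j • φ j := rfl

/-- analysis operator of a finite family -/
noncomputable def auxB {d : ℕ} (φ : Fin d → H) : H →ₗ[ℂ] EuclideanSpace ℂ (Fin d) where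
  toFun h := (WithLp.toLp 2 (fun j => ⟪φ j, h⟫) : EuclideanSpace ℂ (Fin d))
  map_add' h h' := by
    ext j
    show ⟪φ j, _ + _⟫ = _
    rw [inner_add_right]
    rfl
  map_smul' a h := by
    ext j
    show ⟪φ j, _ • _⟫ = _
    rw [inner_smul_right]
    rfl

@[simp] lemma auxB_apply {d : ℕ} (φ : Fin d → H) (h : H) (j : Fin d) :
    auxB φ h j = ⟪φ j, h⟫ := rfl

lemma aux_adj {d : ℕ} (φ : Fin d → H) (c : EuclideanSpace ℂ (Fin d)) (h : H) :
    ⟪auxSyn φ c, h⟫ = ⟪c, auxB φ h⟫ := by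
  rw [auxSyn_apply, sum_inner, PiLp.inner_apply]
  refine Finset.sum_congr rfl fun j _ => ?_
  rw [inner_smul_left, auxB_apply, RCLike.inner_apply, mul_comm]

end Aux
lemma aux_core {H F : Type*} [NormedAddCommGroup H] [InnerProductSpace ℂ H]
    [NormedAddCommGroup F] [InnerProductSpace ℂ F] [CompleteSpace F]
    (T : Submodule ℂ H) [FiniteDimensional ℂ T]
    (A : H →L[ℂ] F) {d : ℕ} (φ : Fin d → H)
    (hmem : ∀ j, φ j ∈ T)
    (hPar : ∀ h ∈ T, ∑ j, ‖⟪φ j, h⟫‖ ^ 2 = ‖h‖ ^ 2)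
    (G : EuclideanSpace ℂ (Fin d) →L[ℂ] F)
    (hG : ∀ c : EuclideanSpace ℂ (Fin d), G c = A (∑ j, c j • φ j))
    (α β : ℝ) (hα : 0 < α) (hαβ : α ≤ β) :
    (∀ h ∈ T, α * ‖h‖ ^ 2 ≤ ‖A h‖ ^ 2 ∧ ‖A h‖ ^ 2 ≤ β * ‖h‖ ^ 2) ↔
      (Module.finrank ℂ (LinearMap.range G.toLinearMap) = Module.finrank ℂ T ∧
        spectrum ℂ ((ContinuousLinearMap.adjoint G).comp G) ⊆
          (fun t : ℝ => (t : ℂ)) '' ({0} ∪ Set.Icc α β)) := by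
  classical
  set syn := auxSyn φ with hsyn_def
  set Bm := auxB φ with hBm_def
  have hGsyn : ∀ c, G c = A (syn c) := fun c => hG c
  have hsyn_mem : ∀ c, syn c ∈ T := by
    intro c
    rw [hsyn_def, auxSyn_apply]
    exact Submodule.sum_mem _ fun j _ => T.smul_mem _ (hmem j)
  have hadj : ∀ (c : EuclideanSpace ℂ (Fin d)) (h : H), ⟪syn c, h⟫ = ⟪c, Bm h⟫ :=
    fun c h => aux_adj φ c h
  have hBnorm : ∀ h ∈ T, ‖Bm h‖ = ‖h‖ := by
    intro h hh
    rw [hBm_def, EuclideanSpace.norm_eq]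
    have h2 : (∑ j, ‖auxB φ h j‖ ^ 2) = ‖h‖ ^ 2 := hPar h hh
    rw [h2, Real.sqrt_sq (norm_nonneg _)]
  have hsynB : ∀ h ∈ T, syn (Bm h) = h := by
    intro h hh
    have hinner : ∀ k ∈ T, ⟪syn (Bm h), k⟫ = ⟪h, k⟫ := by
      intro k hk
      rw [hadj]
      let BT : T →ₗᵢ[ℂ] EuclideanSpace ℂ (Fin d) :=
        { toLinearMap := Bm.comp T.subtype
          norm_map' := fun x => by simpa using hBnorm (x : H) x.2 }
      have := BT.inner_map_map ⟨h, hh⟩ ⟨k, hk⟩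
      simpa [BT, Submodule.coe_inner] using this
    have hk : syn (Bm h) - h ∈ T := T.sub_mem (hsyn_mem _) hh
    have h0 : ⟪syn (Bm h) - h, syn (Bm h) - h⟫ = 0 := by
      rw [inner_sub_left, hinner _ hk, sub_self]
    rw [inner_self_eq_zero] at h0
    exact sub_eq_zero.mp h0
  set M := (ContinuousLinearMap.adjoint G).comp G with hM_def
  have hquad : ∀ c, ⟪c, M c⟫ = ((‖G c‖ ^ 2 : ℝ) : ℂ) := by
    intro c
    have : ⟪c, M c⟫ = ⟪G c, G c⟫ := by
      rw [hM_def, ContinuousLinearMap.comp_apply, ContinuousLinearMap.adjoint_inner_right]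
    rw [this, inner_self_eq_norm_sq_to_K]
    norm_cast
  have hrange_syn : LinearMap.range syn = T := by
    apply le_antisymm
    · rintro x ⟨c, rfl⟩; exact hsyn_mem c
    · intro h hh; exact ⟨Bm h, hsynB h hh⟩
  have hrangeGG : LinearMap.range G.toLinearMap = LinearMap.range (G : EuclideanSpace ℂ (Fin d) →ₗ[ℂ] F) := by
    apply Submodule.ext
    intro x
    simp [LinearMap.mem_range]
  have hrange_G : LinearMap.range G.toLinearMap = Submodule.map (A : H →ₗ[ℂ] F) T := by
    have hcomp : (G : EuclideanSpace ℂ (Fin d) →ₗ[ℂ] F) = (A : H →ₗ[ℂ] F).comp syn := by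
      apply LinearMap.ext
      intro c
      exact hGsyn c
    rw [hrangeGG, hcomp, LinearMap.range_comp, hrange_syn]
  constructor
  · -- forward direction
    intro hstab
    have hAinj : ∀ h ∈ T, A h = 0 → h = 0 := by
      intro h hh h0
      have h1 := (hstab h hh).1
      rw [h0] at h1
      norm_num at h1
      have h2 : ‖h‖ = 0 := by
        by_contra hne
        have hpos : 0 < ‖h‖ := lt_of_le_of_ne (norm_nonneg h) (Ne.symm hne)
        nlinarith [mul_pos hα (mul_pos hpos hpos)]
      exact norm_eq_zero.mp h2
    constructor
    · -- rank condition
      set f := (A : H →ₗ[ℂ] F).domRestrict T with hf_def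
      have hkerf : LinearMap.ker f = ⊥ := by
        rw [LinearMap.ker_eq_bot']
        intro x hx
        exact Subtype.ext (hAinj x x.2 hx)
      have hrangef : LinearMap.range f = Submodule.map (A : H →ₗ[ℂ] F) T := by
        rw [hf_def, LinearMap.range_domRestrict]
      have hrn := LinearMap.finrank_range_add_finrank_ker f
      rw [hkerf, finrank_bot, add_zero, hrangef] at hrn
      rw [hrange_G, hrn]
    · -- spectrum condition
      intro z hz
      obtain ⟨v, hv0, hMv⟩ := (aux_mem_spectrum_iff M z).mp hz
      have hvn : ‖v‖ ≠ 0 := norm_ne_zero_iff.mpr hv0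
      have hv2 : (0:ℝ) < ‖v‖ ^ 2 := by positivity
      have hvC' : ((‖v‖ : ℝ) : ℂ) ≠ 0 := Complex.ofReal_ne_zero.mpr hvn
      have hvC : (((‖v‖ : ℝ) : ℂ)) ^ 2 ≠ 0 := pow_ne_zero _ hvC'
      have hz_eq : z * ((‖v‖ : ℂ)) ^ 2 = ((‖G v‖ ^ 2 : ℝ) : ℂ) := by
        have h1 := hquad v
        rw [hMv, inner_smul_right, inner_self_eq_norm_sq_to_K] at h1
        exact h1
      by_cases hGv : G v = 0
      · have hz0 : z = 0 := by
          rw [hGv] at hz_eq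
          norm_num at hz_eq
          rcases hz_eq with h | h
          · exact h
          · exact absurd h hv0
        exact ⟨0, Or.inl rfl, by simp [hz0]⟩
      · have hz0 : z ≠ 0 := by
          intro h0
          rw [h0, zero_mul] at hz_eq
          have h1 : ‖G v‖ ^ 2 = 0 := by exact_mod_cast hz_eq.symm
          exact hGv (norm_eq_zero.mp (by nlinarith [norm_nonneg (G v)]))
        have hperp : ∀ k : EuclideanSpace ℂ (Fin d), G k = 0 → ⟪v, k⟫ = 0 := by
          intro k hk
          have hv_eq : v = z⁻¹ • M v := by
            rw [hMv, smul_smul, inv_mul_cancel₀ hz0, one_smul]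
          have hMvk : ⟪M v, k⟫ = 0 := by
            rw [hM_def, ContinuousLinearMap.comp_apply,
              ContinuousLinearMap.adjoint_inner_left, hk, inner_zero_right]
          calc ⟪v, k⟫ = ⟪z⁻¹ • M v, k⟫ := by rw [← hv_eq]
          _ = (starRingEnd ℂ) z⁻¹ * ⟪M v, k⟫ := inner_smul_left _ _ _
          _ = 0 := by rw [hMvk, mul_zero]
        have hsk : syn (v - Bm (syn v)) = 0 := by
          rw [map_sub, hsynB (syn v) (hsyn_mem v), sub_self]
        have hGk : G (v - Bm (syn v)) = 0 := by
          rw [hGsyn, hsk, map_zero]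
        have hinner_v : ⟪v, Bm (syn v)⟫ = ⟪v, v⟫ := by
          have h1 := hperp _ hGk
          rw [inner_sub_right, sub_eq_zero] at h1
          exact h1.symm
        have hnorm_syn : ‖syn v‖ ^ 2 = ‖v‖ ^ 2 := by
          have h1 : ⟪syn v, syn v⟫ = ⟪v, v⟫ := by rw [hadj, hinner_v]
          rw [← inner_self_eq_norm_sq (𝕜 := ℂ) (x := syn v),
            ← inner_self_eq_norm_sq (𝕜 := ℂ) (x := v), h1]
        have hb := hstab (syn v) (hsyn_mem v)
        rw [← hGsyn, hnorm_syn] at hb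
        refine ⟨‖G v‖ ^ 2 / ‖v‖ ^ 2, Or.inr ⟨?_, ?_⟩, ?_⟩
        · rw [le_div_iff₀ hv2]
          exact hb.1
        · rw [div_le_iff₀ hv2]
          linarith [hb.2]
        · show ((‖G v‖ ^ 2 / ‖v‖ ^ 2 : ℝ) : ℂ) = z
          have h5 : ((‖G v‖ ^ 2 : ℝ) : ℂ) = z * ((‖v‖ : ℝ) : ℂ) ^ 2 := hz_eq.symm
          rw [Complex.ofReal_div, h5, mul_div_assoc]
          have h6 : (((‖v‖ : ℝ) : ℂ)) ^ 2 / ((‖v‖ ^ 2 : ℝ) : ℂ) = 1 := by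
            rw [div_eq_one_iff_eq (Complex.ofReal_ne_zero.mpr hv2.ne')]
            norm_cast
          rw [h6, mul_one]
  · -- reverse direction
    rintro ⟨hrank, hspec⟩ h hh
    have hker_eq : LinearMap.ker syn = LinearMap.ker (G : EuclideanSpace ℂ (Fin d) →ₗ[ℂ] F) := by
      have hle : LinearMap.ker syn ≤ LinearMap.ker (G : EuclideanSpace ℂ (Fin d) →ₗ[ℂ] F) := by
        intro k hk
        rw [LinearMap.mem_ker] at hk ⊢
        show G k = 0
        rw [hGsyn, hk, map_zero]
      apply Submodule.eq_of_le_of_finrank_le hle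
      have h1 := LinearMap.finrank_range_add_finrank_ker
        (G : EuclideanSpace ℂ (Fin d) →ₗ[ℂ] F)
      have h2 := LinearMap.finrank_range_add_finrank_ker syn
      rw [← hrangeGG, hrank] at h1
      rw [hrange_syn] at h2
      omega
    have hsym : LinearMap.IsSymmetric
        ((M : EuclideanSpace ℂ (Fin d) →ₗ[ℂ] EuclideanSpace ℂ (Fin d))) := by
      intro x y
      show ⟪M x, y⟫ = ⟪x, M y⟫
      rw [hM_def, ContinuousLinearMap.comp_apply, ContinuousLinearMap.comp_apply,
        ContinuousLinearMap.adjoint_inner_left, ContinuousLinearMap.adjoint_inner_right]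
    have hn : Module.finrank ℂ (EuclideanSpace ℂ (Fin d)) = d := finrank_euclideanSpace_fin
    set b := hsym.eigenvectorBasis hn with hb_def
    set μ := hsym.eigenvalues hn with hμ_def
    have happly : ∀ i, M (b i) = ((μ i : ℝ) : ℂ) • b i := fun i =>
      hsym.apply_eigenvectorBasis hn i
    have hμmem : ∀ i, ((μ i : ℝ) : ℂ) ∈ spectrum ℂ M := by
      intro i
      exact (aux_mem_spectrum_iff M _).mpr ⟨b i, b.orthonormal.ne_zero i, happly i⟩
    have hμ : ∀ i, μ i = 0 ∨ (α ≤ μ i ∧ μ i ≤ β) := by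
      intro i
      rcases hspec (hμmem i) with ⟨t, ht, hteq⟩
      have hteq' : t = μ i := by
        have hteq2 : ((t : ℝ) : ℂ) = ((μ i : ℝ) : ℂ) := hteq
        exact_mod_cast hteq2
      rcases ht with h0 | hIcc
      · left; rw [← hteq']; exact h0
      · right; rw [← hteq']; exact ⟨hIcc.1, hIcc.2⟩
    set c := Bm h with hc_def
    have hsynC : syn c = h := hsynB h hh
    have hcn : ‖c‖ = ‖h‖ := hBnorm h hh
    set r := fun i => b.repr c i with hr_def
    have hMc_repr : ∀ i, b.repr (M c) i = μ i * r i := fun i =>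
      hsym.eigenvectorBasis_apply_self_apply hn c i
    have hGc2 : ‖G c‖ ^ 2 = ∑ i, μ i * ‖r i‖ ^ 2 := by
      have h1 : ((‖G c‖ ^ 2 : ℝ) : ℂ) = ⟪c, M c⟫ := (hquad c).symm
      rw [← b.repr.inner_map_map c (M c), PiLp.inner_apply] at h1
      simp only [RCLike.inner_apply, hMc_repr] at h1
      change _ = ∑ x, (μ x : ℂ) * r x * (starRingEnd ℂ) (r x) at h1
      have h2 : ∀ i ∈ Finset.univ, (μ i : ℂ) * r i * (starRingEnd ℂ) (r i)
          = ((μ i * ‖r i‖ ^ 2 : ℝ) : ℂ) := by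
        intro i _
        have h3 : (starRingEnd ℂ) (r i) * r i = ((‖r i‖ : ℂ)) ^ 2 := RCLike.conj_mul (r i)
        calc (μ i : ℂ) * r i * (starRingEnd ℂ) (r i)
            = (μ i : ℂ) * ((starRingEnd ℂ) (r i) * r i) := by ring
        _ = (μ i : ℂ) * ((‖r i‖ : ℂ)) ^ 2 := by rw [h3]
        _ = ((μ i * ‖r i‖ ^ 2 : ℝ) : ℂ) := by norm_cast
      rw [Finset.sum_congr rfl h2, ← Complex.ofReal_sum] at h1
      exact_mod_cast h1
    have hc2 : ‖c‖ ^ 2 = ∑ i, ‖r i‖ ^ 2 := by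
      have h1 : ‖c‖ = ‖b.repr c‖ := (b.repr.norm_map c).symm
      rw [h1, EuclideanSpace.norm_eq, Real.sq_sqrt (by positivity)]
    have hzero : ∀ i, μ i = 0 → r i = 0 := by
      intro i h0
      have hMb : M (b i) = 0 := by rw [happly i, h0]; simp
      have hGb : G (b i) = 0 := by
        have h1 := hquad (b i)
        rw [hMb, inner_zero_right] at h1
        have h2 : ‖G (b i)‖ ^ 2 = 0 := by exact_mod_cast h1.symm
        exact norm_eq_zero.mp (by nlinarith [norm_nonneg (G (b i))])
      have hsb : syn (b i) = 0 := by
        have hmem' : b i ∈ LinearMap.ker (G : EuclideanSpace ℂ (Fin d) →ₗ[ℂ] F) := by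
          rw [LinearMap.mem_ker]
          exact hGb
        rw [← hker_eq, LinearMap.mem_ker] at hmem'
        exact hmem'
      have h4 : r i = ⟪b i, c⟫ := b.repr_apply_apply c i
      rw [h4, hc_def, ← hadj, hsb, inner_zero_left]
    have hAh : ‖A h‖ = ‖G c‖ := by rw [← hsynC, ← hGsyn]
    have hsum : ‖A h‖ ^ 2 = ∑ i, μ i * ‖r i‖ ^ 2 := by rw [hAh, hGc2]
    have hnorm : ‖h‖ ^ 2 = ∑ i, ‖r i‖ ^ 2 := by rw [← hcn, hc2]
    constructor
    · rw [hsum, hnorm, Finset.mul_sum]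
      apply Finset.sum_le_sum
      intro i _
      rcases hμ i with h0 | ⟨h1, _⟩
      · rw [hzero i h0, h0]; simp
      · nlinarith [sq_nonneg ‖r i‖]
    · rw [hsum, hnorm, Finset.mul_sum]
      apply Finset.sum_le_sum
      intro i _
      rcases hμ i with h0 | ⟨_, h2⟩
      · rw [h0]; nlinarith [sq_nonneg ‖r i‖]
      · nlinarith [sq_nonneg ‖r i‖]

/-- Let `{S γ}_{γ ∈ Γ}` be a family of finite-dimensional subspaces of a
separable complex Hilbert space `H`, `χ = ⋃ γ, S γ`, and `S_{γ,θ} = S γ + S θ`.  Let `Ψ` be a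
Bessel sequence in `H` with sampling operator `A`, and for every `γ, θ ∈ Γ` let `Φ_{γ,θ}` be a
Parseval frame for `S_{γ,θ}` with cross-correlation operator `G_{γ,θ} = A ∘ B*_{Φ_{γ,θ}}`.
Then `A` is stable on `χ` with constants `α` and `β` if and only if for all `γ, θ ∈ Γ`:
(i) `dim (range G_{γ,θ}) = dim S_{γ,θ}` and (ii) `σ(G_{γ,θ}* G_{γ,θ}) ⊆ {0} ∪ [α, β]`. -/
theorem stmt_11
    {H : Type*} [NormedAddCommGroup H] [InnerProductSpace ℂ H] [CompleteSpace H]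
    [SecondCountableTopology H]
    {I : Type*} [Countable I]
    {Γ : Type*} (S : Γ → Submodule ℂ H) (hfin : ∀ γ, FiniteDimensional ℂ (S γ))
    (ψ : I → H) (B : ℝ) (hB : 0 < B)
    (hBessel : ∀ h : H, ∑' i : I, ‖⟪ψ i, h⟫‖ ^ 2 ≤ B * ‖h‖ ^ 2)
    (A : H →L[ℂ] lp (fun _ : I => ℂ) 2)
    (hA : ∀ f : H, ∀ i : I, A f i = ⟪ψ i, f⟫)
    (d : Γ → Γ → ℕ) (φ : ∀ γ θ : Γ, Fin (d γ θ) → H)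
    (hmem : ∀ γ θ : Γ, ∀ j, φ γ θ j ∈ (S γ ⊔ S θ : Submodule ℂ H))
    (hParseval : ∀ γ θ : Γ, ∀ h ∈ (S γ ⊔ S θ : Submodule ℂ H),
      ∑ j : Fin (d γ θ), ‖⟪φ γ θ j, h⟫‖ ^ 2 = ‖h‖ ^ 2)
    (G : ∀ γ θ : Γ, EuclideanSpace ℂ (Fin (d γ θ)) →L[ℂ] lp (fun _ : I => ℂ) 2)
    (hG : ∀ γ θ : Γ, ∀ c : EuclideanSpace ℂ (Fin (d γ θ)),
      G γ θ c = A (∑ j : Fin (d γ θ), c j • φ γ θ j))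
    (α β : ℝ) (hα : 0 < α) (hαβ : α ≤ β) :
    (∀ x₁ ∈ ⋃ γ : Γ, (S γ : Set H), ∀ x₂ ∈ ⋃ γ : Γ, (S γ : Set H),
        α * ‖x₁ - x₂‖ ^ 2 ≤ ‖A x₁ - A x₂‖ ^ 2 ∧ ‖A x₁ - A x₂‖ ^ 2 ≤ β * ‖x₁ - x₂‖ ^ 2) ↔
      (∀ γ θ : Γ,
        Module.finrank ℂ (LinearMap.range (G γ θ).toLinearMap) =
            Module.finrank ℂ (S γ ⊔ S θ : Submodule ℂ H) ∧
          spectrum ℂ ((ContinuousLinearMap.adjoint (G γ θ)).comp (G γ θ)) ⊆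
            (fun t : ℝ => (t : ℂ)) '' ({0} ∪ Set.Icc α β)) := by
  have hfinsup : ∀ γ θ : Γ, FiniteDimensional ℂ (S γ ⊔ S θ : Submodule ℂ H) := by
    intro γ θ
    haveI := hfin γ
    haveI := hfin θ
    infer_instance
  constructor
  · intro hstab γ θ
    haveI := hfinsup γ θ
    have hkey : ∀ h ∈ (S γ ⊔ S θ : Submodule ℂ H),
        α * ‖h‖ ^ 2 ≤ ‖A h‖ ^ 2 ∧ ‖A h‖ ^ 2 ≤ β * ‖h‖ ^ 2 := by
      intro h hh
      rcases Submodule.mem_sup.mp hh with ⟨u, hu, v, hv, rfl⟩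
      have h1 := hstab u (Set.mem_iUnion.mpr ⟨γ, hu⟩)
        (-v) (Set.mem_iUnion.mpr ⟨θ, (S θ).neg_mem hv⟩)
      rw [sub_neg_eq_add] at h1
      have h2 : A u - A (-v) = A (u + v) := by
        rw [map_neg, sub_neg_eq_add, ← map_add]
      rwa [h2] at h1
    exact (aux_core _ A (φ γ θ) (hmem γ θ) (hParseval γ θ) (G γ θ) (hG γ θ) α β hα hαβ).mp hkey
  · intro hcond x₁ hx₁ x₂ hx₂
    rcases Set.mem_iUnion.mp hx₁ with ⟨γ, h1⟩
    rcases Set.mem_iUnion.mp hx₂ with ⟨θ, h2⟩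
    haveI := hfinsup γ θ
    have hkey := (aux_core _ A (φ γ θ) (hmem γ θ) (hParseval γ θ) (G γ θ) (hG γ θ)
      α β hα hαβ).mpr (hcond γ θ)
    have hmemsup : x₁ - x₂ ∈ (S γ ⊔ S θ : Submodule ℂ H) :=
      Submodule.sub_mem _ (Submodule.mem_sup_left h1) (Submodule.mem_sup_right h2)
    have h3 := hkey _ hmemsup
    rwa [map_sub] at h3
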